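/- Let φ : ℝᵈ → ℝ satisfy D^β φ(y) = O(1 + |y|^{t - |β| - d - α}) on B_R \ B_h for |β| = 2, where t = 4, α ∈ (0,2), and B_r = [-r, r]ᵈ. Then for the composite trapezoidal rule on a grid of spacing h partitioning B_R \ B_h into cubes {Ω_ℓ} of side h, the total quadrature error obeys Σ_ℓ C h^{d+2} Σ_{|β|=2} ‖D^β φ‖_{L∞(Ω_ℓ)} ≤ C' h², where C, C' are independent of h. -/

import Mathlib

open scoped BigOperators

/-- First-order partial derivative in coordinate direction `i`. -/
noncomputable def pd {d : ℕ} (i : Fin d) (f : EuclideanSpace ℝ (Fin d) → ℝ) :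
    EuclideanSpace ℝ (Fin d) → ℝ :=
  fun x => fderiv ℝ f x (EuclideanSpace.single i 1)

/-- Multi-index partial derivative `D^β`. -/
noncomputable def Dm {d : ℕ} (β : Fin d → ℕ) (f : EuclideanSpace ℝ (Fin d) → ℝ) :
    EuclideanSpace ℝ (Fin d) → ℝ :=
  (List.finRange d).foldr (fun i g => (pd i)^[β i] g) f

/-- The closed grid cube `Ω_ℓ = ∏ᵢ [h ℓᵢ, h (ℓᵢ+1)]` of side `h`. -/
def gridCube (d : ℕ) (h : ℝ) (ℓ : Fin d → ℤ) : Set (EuclideanSpace ℝ (Fin d)) :=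
  {y | ∀ i, h * (ℓ i : ℝ) ≤ y i ∧ y i ≤ h * ((ℓ i : ℝ) + 1)}

/-- The cube `B_r = [-r, r]^d`. -/
def box (d : ℕ) (r : ℝ) : Set (EuclideanSpace ℝ (Fin d)) :=
  {y | ∀ i, |y i| ≤ r}


lemma aux_sumpow (q : ℝ) (hq1 : (-1:ℝ) < q) (hq2 : q ≤ 1) (N : ℕ) (hN : 1 ≤ N) :
    ∑ k ∈ Finset.Icc 1 N, (k:ℝ) ^ q ≤ (2 ^ (q+1) / (q+1) + 1) * (N:ℝ) ^ (q+1) := by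
  have hp : 0 < q + 1 := by linarith
  have hNpos : (0:ℝ) < N := by exact_mod_cast hN
  have hN1 : (1:ℝ) ≤ N := by exact_mod_cast hN
  have hNp1 : (1:ℝ) ≤ (N:ℝ) ^ (q+1) := Real.one_le_rpow hN1 hp.le
  have h2p1 : (1:ℝ) ≤ 2 ^ (q+1) := Real.one_le_rpow one_le_two hp.le
  have h2Np : ((2:ℝ)*N) ^ (q+1) = 2 ^ (q+1) * (N:ℝ) ^ (q+1) :=
    Real.mul_rpow (by norm_num) hNpos.le
  have hre : ∑ k ∈ Finset.Icc 1 N, (k:ℝ) ^ q = ∑ i ∈ Finset.range N, ((1+i:ℕ):ℝ) ^ q := by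
    rw [← Finset.Ico_add_one_right_eq_Icc, Finset.sum_Ico_eq_sum_range]
    simp [add_comm]
  rcases le_or_gt 0 q with hq0 | hq0
  · -- monotone case
    have hmono : MonotoneOn (fun x : ℝ => x ^ q) (Set.Icc (1:ℝ) (1 + N)) := by
      intro a ha b hb hab
      exact Real.rpow_le_rpow (by linarith [ha.1]) hab hq0
    have hint := hmono.sum_le_integral
    have hval : ∫ x in (1:ℝ)..(1 + (N:ℝ)), x ^ q = ((1+(N:ℝ)) ^ (q+1) - 1) / (q+1) := by
      rw [integral_rpow (Or.inl hq1)]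
      simp
    rw [hre]
    have hsum : ∑ i ∈ Finset.range N, ((1+i:ℕ):ℝ) ^ q ≤ ((1+(N:ℝ)) ^ (q+1) - 1) / (q+1) := by
      rw [← hval]
      convert hint using 2 with i
      push_cast; ring
    refine hsum.trans ?_
    have h1 : ((1:ℝ)+N) ^ (q+1) ≤ 2 ^ (q+1) * (N:ℝ) ^ (q+1) := by
      rw [← h2Np]
      exact Real.rpow_le_rpow (by linarith) (by linarith) hp.le
    rw [div_le_iff₀ hp]
    have hNp0 : (0:ℝ) ≤ (N:ℝ) ^ (q+1) := by positivity
    have : 2 ^ (q+1) / (q+1) * (q+1) = 2 ^ (q+1) := by field_simp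
    nlinarith [hNp1, hp]
  · -- antitone case
    have hanti : AntitoneOn (fun x : ℝ => x ^ q) (Set.Icc (1:ℝ) (1 + (N-1:ℕ))) := by
      intro a ha b hb hab
      exact Real.rpow_le_rpow_of_nonpos (by linarith [ha.1]) hab hq0.le
    have hint := hanti.sum_le_integral
    have hcast : (1:ℝ) + ((N-1:ℕ):ℝ) = N := by
      have : ((N-1:ℕ):ℝ) = (N:ℝ) - 1 := by
        push_cast [Nat.cast_sub hN]; ring
      rw [this]; ring
    have hval : ∫ x in (1:ℝ)..(1 + ((N-1:ℕ):ℝ)), x ^ q = ((N:ℝ) ^ (q+1) - 1) / (q+1) := by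
      rw [integral_rpow (Or.inl hq1), hcast]
      simp
    rw [hval] at hint
    rw [hre]
    have hsplit : ∑ i ∈ Finset.range N, ((1+i:ℕ):ℝ) ^ q
        = ((1:ℕ):ℝ) ^ q + ∑ i ∈ Finset.range (N-1), ((2+i:ℕ):ℝ) ^ q := by
      have hN' : N = (N-1) + 1 := by omega
      rw [hN', Finset.sum_range_succ']
      rw [add_comm]
      congr 1
      · apply Finset.sum_congr rfl
        intro i _
        norm_num
        congr 1
        push_cast; ring
    rw [hsplit]
    have hsum2 : ∑ i ∈ Finset.range (N-1), ((2+i:ℕ):ℝ) ^ q ≤ ((N:ℝ) ^ (q+1) - 1) / (q+1) := by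
      refine le_trans ?_ hint
      apply le_of_eq
      apply Finset.sum_congr rfl
      intro i _
      norm_num
      congr 1
      push_cast; ring
    have h1q : ((1:ℕ):ℝ) ^ q = 1 := by norm_num
    rw [h1q]
    have hNp0 : (0:ℝ) ≤ (N:ℝ) ^ (q+1) := by positivity
    have key : ((N:ℝ) ^ (q+1) - 1) / (q+1) ≤ 2 ^ (q+1) / (q+1) * (N:ℝ) ^ (q+1) := by
      rw [div_le_iff₀ hp]
      have : 2 ^ (q+1) / (q+1) * (N:ℝ)^(q+1) * (q+1) = 2 ^ (q+1) * (N:ℝ)^(q+1) := by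
        field_simp
      rw [this]
      nlinarith
    linarith [hsum2, key, hNp1]

def mcoord (z : ℤ) : ℕ := if 0 ≤ z then z.toNat else (z+1).natAbs

def mdist {d : ℕ} (ℓ : Fin d → ℤ) : ℕ := Finset.univ.sup fun i => mcoord (ℓ i)

lemma mcoord_eq {z : ℤ} {k : ℕ} (h : mcoord z = k) : z = k ∨ z = -(k:ℤ)-1 := by
  unfold mcoord at h; split at h <;> omega

lemma mcoord_le {z : ℤ} {k : ℕ} (h : mcoord z ≤ k) : -(k:ℤ)-1 ≤ z ∧ z ≤ k := by
  unfold mcoord at h; split at h <;> omega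

lemma card_fiber {d : ℕ} (hd : 0 < d) (k : ℕ) (s : Finset (Fin d → ℤ)) :
    ((s.filter fun ℓ => mdist ℓ = k).card : ℝ) ≤ 2*d*(2*(k:ℝ)+2)^(d-1) := by
  classical
  have : Nonempty (Fin d) := Fin.pos_iff_nonempty.mp hd
  set T : Finset (Fin d → ℤ) := Finset.univ.biUnion (fun i : Fin d =>
    Fintype.piFinset (fun j => if j = i then ({(k:ℤ), -(k:ℤ)-1} : Finset ℤ)
      else Finset.Icc (-(k:ℤ)-1) (k:ℤ))) with hT
  have hsub : (s.filter fun ℓ => mdist ℓ = k) ⊆ T := by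
    intro ℓ hℓ
    rw [Finset.mem_filter] at hℓ
    obtain ⟨-, hm⟩ := hℓ
    unfold mdist at hm
    have hne : (Finset.univ : Finset (Fin d)).Nonempty := Finset.univ_nonempty
    obtain ⟨i, -, hi⟩ := Finset.exists_mem_eq_sup Finset.univ hne (fun i => mcoord (ℓ i))
    rw [Finset.mem_biUnion]
    refine ⟨i, Finset.mem_univ i, ?_⟩
    rw [Fintype.mem_piFinset]
    intro j
    by_cases hji : j = i
    · subst hji
      simp only [eq_self_iff_true, if_true, Finset.mem_insert, Finset.mem_singleton]
      have : mcoord (ℓ j) = k := by rw [hi] at hm; omega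
      exact mcoord_eq this
    · simp only [if_neg hji, Finset.mem_Icc]
      have : mcoord (ℓ j) ≤ k := by
        rw [← hm]
        exact Finset.le_sup (f := fun i => mcoord (ℓ i)) (Finset.mem_univ j)
      exact mcoord_le this
  have hcard : (s.filter fun ℓ => mdist ℓ = k).card ≤ T.card := Finset.card_le_card hsub
  have hpi : ∀ i : Fin d, (Fintype.piFinset (fun j => if j = i then ({(k:ℤ), -(k:ℤ)-1} : Finset ℤ)
      else Finset.Icc (-(k:ℤ)-1) (k:ℤ))).card = 2 * (2*k+2)^(d-1) := by
    intro i
    rw [Fintype.card_piFinset]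
    have h2 : ({(k:ℤ), -(k:ℤ)-1} : Finset ℤ).card = 2 := by
      rw [Finset.card_insert_of_notMem (by simp; omega), Finset.card_singleton]
    have hIcc : (Finset.Icc (-(k:ℤ)-1) (k:ℤ)).card = 2*k+2 := by
      rw [Int.card_Icc]
      omega
    calc ∏ j, (if j = i then ({(k:ℤ), -(k:ℤ)-1} : Finset ℤ)
          else Finset.Icc (-(k:ℤ)-1) (k:ℤ)).card
        = (if i = i then ({(k:ℤ), -(k:ℤ)-1} : Finset ℤ)
            else Finset.Icc (-(k:ℤ)-1) (k:ℤ)).card *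
          ∏ j ∈ Finset.univ.erase i, (if j = i then ({(k:ℤ), -(k:ℤ)-1} : Finset ℤ)
            else Finset.Icc (-(k:ℤ)-1) (k:ℤ)).card := by
          exact (Finset.mul_prod_erase _ _ (Finset.mem_univ i)).symm
      _ = 2 * (2*k+2)^(d-1) := by
          rw [if_pos rfl, h2]
          congr 1
          rw [Finset.prod_congr rfl (fun j hj => by
            rw [if_neg (Finset.mem_erase.mp hj).1, hIcc]),
            Finset.prod_const, Finset.card_erase_of_mem (Finset.mem_univ i),
            Finset.card_univ, Fintype.card_fin]
  have hTcard : T.card ≤ d * (2 * (2*k+2)^(d-1)) := by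
    refine le_trans Finset.card_biUnion_le ?_
    calc ∑ i : Fin d, (Fintype.piFinset (fun j => if j = i then ({(k:ℤ), -(k:ℤ)-1} : Finset ℤ)
          else Finset.Icc (-(k:ℤ)-1) (k:ℤ))).card ≤ ∑ _i : Fin d, 2 * (2*k+2)^(d-1) :=
          Finset.sum_le_sum (fun i _ => le_of_eq (hpi i))
      _ = d * (2 * (2*k+2)^(d-1)) := by rw [Finset.sum_const, Finset.card_univ,
            Fintype.card_fin, smul_eq_mul]
  have := hcard.trans hTcard
  calc ((s.filter fun ℓ => mdist ℓ = k).card : ℝ) ≤ ((d * (2 * (2*k+2)^(d-1)) : ℕ) : ℝ) := by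
        exact_mod_cast this
    _ = 2*d*(2*(k:ℝ)+2)^(d-1) := by push_cast; ring





lemma abs_coord_le_norm {d : ℕ} (y : EuclideanSpace ℝ (Fin d)) (i : Fin d) : |y i| ≤ ‖y‖ := by
  rw [EuclideanSpace.norm_eq, ← Real.sqrt_sq_eq_abs]
  apply Real.sqrt_le_sqrt
  calc (y i)^2 = ‖y i‖^2 := by rw [Real.norm_eq_abs, sq_abs]
    _ ≤ ∑ j, ‖y j‖^2 := Finset.single_le_sum (f := fun j => ‖y j‖^2)
        (fun j _ => sq_nonneg _) (Finset.mem_univ i)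

lemma norm_le_of_mem_box {d : ℕ} {R : ℝ} (hR : 0 ≤ R) {y : EuclideanSpace ℝ (Fin d)}
    (hy : y ∈ box d R) : ‖y‖ ≤ Real.sqrt d * R := by
  rw [EuclideanSpace.norm_eq]
  have h1 : ∑ j, ‖y j‖^2 ≤ (d : ℝ) * R^2 := by
    calc ∑ j, ‖y j‖^2 ≤ ∑ _j : Fin d, R^2 := by
          apply Finset.sum_le_sum
          intro j _
          rw [Real.norm_eq_abs]
          exact pow_le_pow_left₀ (abs_nonneg _) (hy j) 2
      _ = (d : ℝ) * R^2 := by rw [Finset.sum_const, Finset.card_univ, Fintype.card_fin,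
            nsmul_eq_mul]
  calc Real.sqrt (∑ j, ‖y j‖^2) ≤ Real.sqrt ((d:ℝ) * R^2) := Real.sqrt_le_sqrt h1
    _ = Real.sqrt d * R := by
        rw [Real.sqrt_mul (Nat.cast_nonneg d), Real.sqrt_sq hR]

lemma corner_mem_gridCube {d : ℕ} {h : ℝ} (hh : 0 ≤ h) (ℓ : Fin d → ℤ) :
    (WithLp.toLp 2 (fun j => h * (ℓ j : ℝ)) : EuclideanSpace ℝ (Fin d)) ∈ gridCube d h ℓ := by
  intro i
  constructor
  · exact le_refl _
  · show h * (ℓ i : ℝ) ≤ h * ((ℓ i : ℝ) + 1)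
    have : (ℓ i : ℝ) ≤ (ℓ i : ℝ) + 1 := by linarith
    exact mul_le_mul_of_nonneg_left this hh

lemma mdist_ge_one {d : ℕ} {h R : ℝ} (hh : 0 < h) {ℓ : Fin d → ℤ}
    (hsub : gridCube d h ℓ ⊆ box d R \ box d h) : 1 ≤ mdist ℓ := by
  obtain ⟨-, hnot⟩ := hsub (corner_mem_gridCube hh.le ℓ)
  rw [box, Set.mem_setOf_eq] at hnot
  push_neg at hnot
  obtain ⟨i, hi⟩ := hnot
  have h1 : h * |(ℓ i : ℝ)| > h := by
    have hi' : h < |h * (ℓ i : ℝ)| := hi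
    rwa [abs_mul, abs_of_pos hh] at hi'
  have h2 : (1:ℝ) < |(ℓ i : ℝ)| := by
    rw [mul_comm] at h1
    exact lt_of_mul_lt_mul_right (by linarith) hh.le
  have h3 : 1 < (ℓ i).natAbs := by
    have : ((ℓ i).natAbs : ℝ) = |(ℓ i : ℝ)| := by
      push_cast [Nat.cast_natAbs]
      rfl
    rw [← this] at h2
    exact_mod_cast h2
  have h4 : 1 ≤ mcoord (ℓ i) := by unfold mcoord; split <;> omega
  exact le_trans h4 (Finset.le_sup (f := fun i => mcoord (ℓ i)) (Finset.mem_univ i))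

lemma natAbs_le {d : ℕ} {h R : ℝ} (hh : 0 < h) {ℓ : Fin d → ℤ}
    (hsub : gridCube d h ℓ ⊆ box d R \ box d h) (j : Fin d) :
    ((ℓ j).natAbs : ℝ) ≤ R / h := by
  obtain ⟨hbox, -⟩ := hsub (corner_mem_gridCube hh.le ℓ)
  have h1 : |h * (ℓ j : ℝ)| ≤ R := hbox j
  rw [le_div_iff₀ hh]
  have h2 : ((ℓ j).natAbs : ℝ) = |(ℓ j : ℝ)| := by push_cast [Nat.cast_natAbs]; rfl
  calc ((ℓ j).natAbs : ℝ) * h = |(ℓ j : ℝ)| * h := by rw [h2]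
    _ = |h * (ℓ j : ℝ)| := by rw [abs_mul, abs_of_pos hh]; ring
    _ ≤ R := h1

lemma mdist_le_floor {d : ℕ} {h R : ℝ} (hh : 0 < h) {ℓ : Fin d → ℤ}
    (hsub : gridCube d h ℓ ⊆ box d R \ box d h) : mdist ℓ ≤ ⌊R / h⌋₊ := by
  apply Finset.sup_le
  intro i _
  apply Nat.le_floor
  calc (mcoord (ℓ i) : ℝ) ≤ ((ℓ i).natAbs : ℝ) := by
        have : mcoord (ℓ i) ≤ (ℓ i).natAbs := by unfold mcoord; split <;> omega
        exact_mod_cast this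
    _ ≤ R / h := natAbs_le hh hsub i

lemma norm_ge_of_mem_gridCube {d : ℕ} {h R : ℝ} (hd : 0 < d) (hh : 0 < h) {ℓ : Fin d → ℤ}
    (hsub : gridCube d h ℓ ⊆ box d R \ box d h) {y : EuclideanSpace ℝ (Fin d)}
    (hy : y ∈ gridCube d h ℓ) : h * mdist ℓ ≤ ‖y‖ := by
  have : Nonempty (Fin d) := Fin.pos_iff_nonempty.mp hd
  obtain ⟨i, -, hi⟩ := Finset.exists_mem_eq_sup Finset.univ Finset.univ_nonempty
    (fun i => mcoord (ℓ i))
  rw [mdist, hi]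
  obtain ⟨hlo, hhi⟩ := hy i
  have key : h * (mcoord (ℓ i) : ℝ) ≤ |y i| := by
    unfold mcoord
    rcases le_or_gt 0 (ℓ i) with hz | hz
    · rw [if_pos hz]
      have : ((ℓ i).toNat : ℝ) = (ℓ i : ℝ) := by
        exact_mod_cast Int.toNat_of_nonneg hz
      rw [this]
      exact le_trans hlo (le_abs_self _)
    · rw [if_neg (not_le.mpr hz)]
      have hz1 : ℓ i + 1 ≤ 0 := by omega
      have : ((ℓ i + 1).natAbs : ℝ) = -((ℓ i : ℝ) + 1) := by
        have := Int.abs_eq_natAbs (ℓ i + 1)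
        have h2 : |((ℓ i : ℝ) + 1)| = -((ℓ i : ℝ)+1) := by
          rw [abs_of_nonpos]; exact_mod_cast hz1
        rw [← h2]
        push_cast [Nat.cast_natAbs]
        rfl
      rw [this]
      calc h * -((ℓ i : ℝ) + 1) = -(h * ((ℓ i : ℝ)+1)) := by ring
        _ ≤ -y i := by linarith
        _ ≤ |y i| := neg_le_abs _
  exact le_trans key (abs_coord_le_norm y i)

lemma master {d : ℕ} (hd : 0 < d) (α R : ℝ) (hα0 : 0 < α) (hα2 : α < 2) (hR : 0 < R)
    {h : ℝ} (hh : 0 < h) (hhR : h ≤ R) (s : Finset (Fin d → ℤ))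
    (hs : ∀ ℓ ∈ s, gridCube d h ℓ ⊆ box d R \ box d h) :
    ∑ ℓ ∈ s, h^(d+2) * ((1 + (Real.sqrt d * R) ^ ((4:ℝ) - 2 - d - α))
        + (h * mdist ℓ) ^ ((4:ℝ) - 2 - d - α))
      ≤ (3^d * R^d * (1 + (Real.sqrt d * R) ^ ((4:ℝ) - 2 - d - α))
          + 2*d*4^(d-1) * (2 ^ ((1-α)+1) / ((1-α)+1) + 1) * R^((2:ℝ)-α)) * h^2 := by
  classical
  set E : ℝ := (4:ℝ) - 2 - d - α with hE
  set N : ℕ := ⌊R / h⌋₊ with hN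
  have hRh1 : (1:ℝ) ≤ R / h := (one_le_div hh).mpr hhR
  have hN1 : 1 ≤ N := Nat.le_floor (by exact_mod_cast hRh1)
  have hNle : (N : ℝ) ≤ R / h := Nat.floor_le (by linarith)
  have hsd0 : (0:ℝ) ≤ (Real.sqrt d * R) ^ E := Real.rpow_nonneg (by positivity) _
  -- Part A : cardinality bound
  have hcard : (s.card : ℝ) ≤ (3 * (R/h))^d := by
    have hsub : s ⊆ Fintype.piFinset (fun _ : Fin d => Finset.Icc (-(N:ℤ)) (N:ℤ)) := by
      intro ℓ hℓ
      rw [Fintype.mem_piFinset]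
      intro j
      rw [Finset.mem_Icc]
      have h1 : ((ℓ j).natAbs : ℝ) ≤ R / h := natAbs_le hh (hs ℓ hℓ) j
      have h2 : (ℓ j).natAbs ≤ N := Nat.le_floor h1
      omega
    have h3 : s.card ≤ (2*N+1)^d := by
      refine le_trans (Finset.card_le_card hsub) ?_
      rw [Fintype.card_piFinset]
      apply le_of_eq
      have hc : (Finset.Icc (-(N:ℤ)) (N:ℤ)).card = 2*N+1 := by
        rw [Int.card_Icc]; omega
      simp only [hc, Finset.prod_const, Finset.card_univ, Fintype.card_fin]
    calc (s.card : ℝ) ≤ ((2*N+1:ℕ):ℝ)^d := by exact_mod_cast h3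
      _ ≤ (3 * (R/h))^d := by
          apply pow_le_pow_left₀ (by positivity)
          push_cast
          linarith
  -- split sum
  have hsplit : ∑ ℓ ∈ s, h^(d+2) * ((1 + (Real.sqrt d * R) ^ E) + (h * mdist ℓ) ^ E)
      = (s.card : ℝ) * (h^(d+2) * (1 + (Real.sqrt d * R) ^ E))
        + ∑ ℓ ∈ s, h^(d+2) * (h * mdist ℓ) ^ E := by
    rw [Finset.sum_congr rfl (fun ℓ _ => by ring :
      ∀ ℓ ∈ s, h^(d+2) * ((1 + (Real.sqrt d * R) ^ E) + (h * mdist ℓ) ^ E)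
        = h^(d+2) * (1 + (Real.sqrt d * R) ^ E) + h^(d+2) * (h * mdist ℓ) ^ E),
      Finset.sum_add_distrib, Finset.sum_const, nsmul_eq_mul]
  rw [hsplit]
  -- Part A final
  have hA : (s.card : ℝ) * (h^(d+2) * (1 + (Real.sqrt d * R) ^ E))
      ≤ 3^d * R^d * (1 + (Real.sqrt d * R) ^ E) * h^2 := by
    have h1 : (0:ℝ) ≤ h^(d+2) * (1 + (Real.sqrt d * R) ^ E) := by positivity
    have h2 := mul_le_mul_of_nonneg_right hcard h1
    refine h2.trans (le_of_eq ?_)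
    have : (3 * (R/h))^d * h^(d+2) = 3^d * R^d * h^2 := by
      rw [pow_add, ← mul_assoc, ← mul_pow]
      rw [show 3 * (R/h) * h = 3 * R by field_simp]
      rw [mul_pow]
    calc (3 * (R/h))^d * (h^(d+2) * (1 + (Real.sqrt d * R) ^ E))
        = (3 * (R/h))^d * h^(d+2) * (1 + (Real.sqrt d * R) ^ E) := by ring
      _ = 3^d * R^d * h^2 * (1 + (Real.sqrt d * R) ^ E) := by rw [this]
      _ = 3^d * R^d * (1 + (Real.sqrt d * R) ^ E) * h^2 := by ring
  -- Part B
  have hq1 : (-1:ℝ) < 1 - α := by linarith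
  have hq2 : (1:ℝ) - α ≤ 1 := by linarith
  have hfib : ∑ ℓ ∈ s, h^(d+2) * (h * mdist ℓ) ^ E
      = ∑ k ∈ Finset.Icc 1 N, ∑ ℓ ∈ s.filter (fun ℓ => mdist ℓ = k),
          h^(d+2) * (h * mdist ℓ) ^ E := by
    rw [Finset.sum_fiberwise_of_maps_to]
    intro ℓ hℓ
    rw [Finset.mem_Icc]
    exact ⟨mdist_ge_one hh (hs ℓ hℓ), mdist_le_floor hh (hs ℓ hℓ)⟩
  have hinner : ∀ k ∈ Finset.Icc 1 N,
      ∑ ℓ ∈ s.filter (fun ℓ => mdist ℓ = k), h^(d+2) * (h * mdist ℓ) ^ E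
        ≤ 2*d*4^(d-1) * ((k:ℝ) ^ ((1:ℝ)-α)) * (h^(d+2) * h ^ E) := by
    intro k hk
    rw [Finset.mem_Icc] at hk
    have hk1 : 1 ≤ k := hk.1
    have hkR : (1:ℝ) ≤ (k:ℝ) := by exact_mod_cast hk1
    have heq : ∀ ℓ ∈ s.filter (fun ℓ => mdist ℓ = k),
        h^(d+2) * (h * mdist ℓ) ^ E = h^(d+2) * (h * k) ^ E := by
      intro ℓ hℓ
      rw [Finset.mem_filter] at hℓ
      rw [hℓ.2]
    rw [Finset.sum_congr rfl heq, Finset.sum_const, nsmul_eq_mul]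
    have hcardk := card_fiber hd k s
    have hterm0 : (0:ℝ) ≤ h^(d+2) * (h * k) ^ E := by positivity
    refine (mul_le_mul_of_nonneg_right hcardk hterm0).trans ?_
    -- now bound 2d(2k+2)^{d-1} * (h^(d+2) (hk)^E)
    have hkE : (h * (k:ℝ)) ^ E = h ^ E * (k:ℝ) ^ E :=
      Real.mul_rpow hh.le (by positivity)
    have hpow : (2*(k:ℝ)+2)^(d-1) ≤ 4^(d-1) * (k:ℝ)^(d-1) := by
      rw [← mul_pow]
      apply pow_le_pow_left₀ (by linarith)
      linarith
    have hcomb : ((k:ℝ))^(d-1) * (k:ℝ) ^ E = (k:ℝ) ^ ((1:ℝ)-α) := by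
      rw [← Real.rpow_natCast (k:ℝ) (d-1), ← Real.rpow_add (by linarith : (0:ℝ) < k)]
      congr 1
      have : ((d-1:ℕ):ℝ) = (d:ℝ) - 1 := by
        push_cast [Nat.cast_sub hd]
        ring
      rw [this, hE]
      ring
    calc (2*(d:ℝ)*(2*(k:ℝ)+2)^(d-1)) * (h^(d+2) * (h * k) ^ E)
        ≤ (2*(d:ℝ)*(4^(d-1) * (k:ℝ)^(d-1))) * (h^(d+2) * (h * k) ^ E) := by
          apply mul_le_mul_of_nonneg_right _ hterm0
          apply mul_le_mul_of_nonneg_left hpow (by positivity)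
      _ = 2*d*4^(d-1) * ((k:ℝ)^(d-1) * (k:ℝ) ^ E) * (h^(d+2) * h ^ E) := by
          rw [hkE]; ring
      _ = 2*d*4^(d-1) * ((k:ℝ) ^ ((1:ℝ)-α)) * (h^(d+2) * h ^ E) := by rw [hcomb]
  have hB : ∑ ℓ ∈ s, h^(d+2) * (h * mdist ℓ) ^ E
      ≤ 2*d*4^(d-1) * (2 ^ ((1-α)+1) / ((1-α)+1) + 1) * R^((2:ℝ)-α) * h^2 := by
    rw [hfib]
    refine (Finset.sum_le_sum hinner).trans ?_
    rw [← Finset.sum_mul, ← Finset.mul_sum]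
    have hsumk := aux_sumpow (1-α) hq1 hq2 N hN1
    have hfac0 : (0:ℝ) ≤ h^(d+2) * h ^ E := by positivity
    have h2d0 : (0:ℝ) ≤ 2*(d:ℝ)*4^(d-1) := by positivity
    refine le_trans (mul_le_mul_of_nonneg_right
      (mul_le_mul_of_nonneg_left hsumk h2d0) hfac0) ?_
    -- now: 2d4^{d-1} * (cq * N^{2-α}) * (h^{d+2} h^E) ≤ 2d4^{d-1} cq R^{2-α} h²
    have hcq0 : (0:ℝ) ≤ 2 ^ ((1-α)+1) / ((1-α)+1) + 1 := by
      have : (0:ℝ) < (1-α)+1 := by linarith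
      positivity
    have hNval : (N:ℝ) ^ ((1-α)+1) ≤ (R/h) ^ ((2:ℝ)-α) := by
      rw [show (1-α)+1 = (2:ℝ)-α by ring]
      exact Real.rpow_le_rpow (by positivity) hNle (by linarith)
    have hkey : h^(d+2) * h ^ E * (R/h) ^ ((2:ℝ)-α) = R^((2:ℝ)-α) * h^2 := by
      have h1 : (R/h) ^ ((2:ℝ)-α) = R^((2:ℝ)-α) * h ^ (-((2:ℝ)-α)) := by
        rw [Real.div_rpow hR.le hh.le, Real.rpow_neg hh.le, div_eq_mul_inv]
      have h2 : h^(d+2) * h ^ E = h ^ ((4:ℝ)-α) := by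
        rw [← Real.rpow_natCast h (d+2), ← Real.rpow_add hh]
        congr 1
        push_cast [hE]
        ring
      rw [h1, h2]
      have h3 : h ^ ((4:ℝ)-α) * h ^ (-((2:ℝ)-α)) = h ^ (2:ℝ) := by
        rw [← Real.rpow_add hh]
        congr 1
        ring
      calc h ^ ((4:ℝ)-α) * (R^((2:ℝ)-α) * h ^ (-((2:ℝ)-α)))
          = R^((2:ℝ)-α) * (h ^ ((4:ℝ)-α) * h ^ (-((2:ℝ)-α))) := by ring
        _ = R^((2:ℝ)-α) * h ^ (2:ℝ) := by rw [h3]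
        _ = R^((2:ℝ)-α) * h^2 := by rw [Real.rpow_two]
    calc 2*(d:ℝ)*4^(d-1) * ((2 ^ ((1-α)+1) / ((1-α)+1) + 1) * (N:ℝ)^((1-α)+1))
          * (h^(d+2) * h ^ E)
        ≤ 2*(d:ℝ)*4^(d-1) * ((2 ^ ((1-α)+1) / ((1-α)+1) + 1) * (R/h)^((2:ℝ)-α))
          * (h^(d+2) * h ^ E) := by
          apply mul_le_mul_of_nonneg_right _ hfac0
          apply mul_le_mul_of_nonneg_left _ h2d0
          exact mul_le_mul_of_nonneg_left hNval hcq0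
      _ = 2*(d:ℝ)*4^(d-1) * (2 ^ ((1-α)+1) / ((1-α)+1) + 1)
          * (h^(d+2) * h ^ E * (R/h)^((2:ℝ)-α)) := by ring
      _ = 2*d*4^(d-1) * (2 ^ ((1-α)+1) / ((1-α)+1) + 1) * R^((2:ℝ)-α) * h^2 := by
          rw [hkey]; ring
  calc (s.card : ℝ) * (h^(d+2) * (1 + (Real.sqrt d * R) ^ E))
        + ∑ ℓ ∈ s, h^(d+2) * (h * mdist ℓ) ^ E
      ≤ 3^d * R^d * (1 + (Real.sqrt d * R) ^ E) * h^2
        + 2*d*4^(d-1) * (2 ^ ((1-α)+1) / ((1-α)+1) + 1) * R^((2:ℝ)-α) * h^2 :=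
        add_le_add hA hB
    _ = (3^d * R^d * (1 + (Real.sqrt d * R) ^ E)
          + 2*d*4^(d-1) * (2 ^ ((1-α)+1) / ((1-α)+1) + 1) * R^((2:ℝ)-α)) * h^2 := by
        ring

theorem stmt14 {d : ℕ} (hd : 0 < d) (α R C K : ℝ) (hα : α ∈ Set.Ioo (0 : ℝ) 2)
    (hR : 0 < R) (hC : 0 ≤ C)
    (φ : EuclideanSpace ℝ (Fin d) → ℝ)
    (hφ : ∀ β : Fin d → ℕ, (∑ i, β i) = 2 →
      ∀ y ∈ box d R, y ≠ 0 →
        |Dm β φ y| ≤ K * (1 + ‖y‖ ^ ((4 : ℝ) - 2 - d - α))) :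
    ∃ C' : ℝ, ∀ h : ℝ, 0 < h → h ≤ R →
      (∑' ℓ : {ℓ : Fin d → ℤ // gridCube d h ℓ ⊆ box d R \ box d h},
        C * h ^ (d + 2) *
          ∑ β ∈ Finset.univ.filter (fun β : Fin d → Fin 3 => (∑ i, (β i : ℕ)) = 2),
            sSup ((fun y => |Dm (fun i => (β i : ℕ)) φ y|) '' gridCube d h ℓ.1))
      ≤ C' * h ^ 2 := by
  classical
  obtain ⟨hα0, hα2⟩ := hα
  set E : ℝ := (4:ℝ) - 2 - (d:ℝ) - α with hE
  set K' : ℝ := max K 0 with hK'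
  set nβ : ℕ := (Finset.univ.filter (fun β : Fin d → Fin 3 => (∑ i, (β i : ℕ)) = 2)).card
    with hnβ
  set bigc : ℝ := 3^d * R^d * (1 + (Real.sqrt d * R) ^ E)
      + 2*d*4^(d-1) * (2 ^ ((1-α)+1) / ((1-α)+1) + 1) * R^((2:ℝ)-α) with hbigc
  have hK'0 : (0:ℝ) ≤ K' := le_max_right _ _
  have hsd0 : (0:ℝ) ≤ (Real.sqrt d * R) ^ E := Real.rpow_nonneg (by positivity) _
  have hbigc0 : 0 ≤ bigc := by
    rw [hbigc]
    have h1 : (0:ℝ) ≤ 3^d * R^d * (1 + (Real.sqrt d * R) ^ E) := by positivity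
    have hcq0 : (0:ℝ) ≤ 2 ^ ((1-α)+1) / ((1-α)+1) + 1 := by
      have : (0:ℝ) < (1-α)+1 := by linarith
      positivity
    have h2 : (0:ℝ) ≤ 2*d*4^(d-1) * (2 ^ ((1-α)+1) / ((1-α)+1) + 1) * R^((2:ℝ)-α) := by
      have : (0:ℝ) ≤ R^((2:ℝ)-α) := by positivity
      positivity
    linarith
  refine ⟨C * nβ * K' * bigc, ?_⟩
  intro h hh hhR
  have hCnK0 : (0:ℝ) ≤ C * nβ * K' := by positivity
  have hterm : ∀ ℓ : Fin d → ℤ, gridCube d h ℓ ⊆ box d R \ box d h →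
      C * h ^ (d + 2) *
        ∑ β ∈ Finset.univ.filter (fun β : Fin d → Fin 3 => (∑ i, (β i : ℕ)) = 2),
          sSup ((fun y => |Dm (fun i => (β i : ℕ)) φ y|) '' gridCube d h ℓ)
      ≤ (C * nβ * K') * (h^(d+2) * ((1 + (Real.sqrt d * R) ^ E) + (h * mdist ℓ) ^ E)) := by
    intro ℓ hsub
    have hm1 : 1 ≤ mdist ℓ := mdist_ge_one hh hsub
    have hm1R : (1:ℝ) ≤ (mdist ℓ : ℝ) := by exact_mod_cast hm1
    have hml : (0:ℝ) < h * (mdist ℓ : ℝ) := by nlinarith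
    have hB0 : (0:ℝ) ≤ (1 + (Real.sqrt d * R) ^ E) + (h * mdist ℓ) ^ E := by
      have : (0:ℝ) ≤ (h * (mdist ℓ:ℝ)) ^ E := Real.rpow_nonneg hml.le _
      linarith
    have hssup : ∀ β : Fin d → Fin 3,
        β ∈ Finset.univ.filter (fun β : Fin d → Fin 3 => (∑ i, (β i : ℕ)) = 2) →
        sSup ((fun y => |Dm (fun i => (β i : ℕ)) φ y|) '' gridCube d h ℓ)
          ≤ K' * ((1 + (Real.sqrt d * R) ^ E) + (h * mdist ℓ) ^ E) := by
      intro β hβ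
      rw [Finset.mem_filter] at hβ
      apply Real.sSup_le
      · rintro x ⟨y, hy, rfl⟩
        have hymem := hsub hy
        have hlo : h * (mdist ℓ : ℝ) ≤ ‖y‖ := norm_ge_of_mem_gridCube hd hh hsub hy
        have hypos : (0:ℝ) < ‖y‖ := lt_of_lt_of_le hml hlo
        have hyne : y ≠ 0 := by
          intro h0
          rw [h0, norm_zero] at hypos
          exact lt_irrefl 0 hypos
        have happ := hφ (fun i => (β i : ℕ)) hβ.2 y hymem.1 hyne
        refine happ.trans ?_
        have h1 : (0:ℝ) ≤ 1 + ‖y‖ ^ E := by positivity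
        have h2 : K * (1 + ‖y‖ ^ E) ≤ K' * (1 + ‖y‖ ^ E) :=
          mul_le_mul_of_nonneg_right (le_max_left K 0) h1
        refine h2.trans (mul_le_mul_of_nonneg_left ?_ hK'0)
        have key : ‖y‖ ^ E ≤ (Real.sqrt d * R) ^ E + (h * mdist ℓ) ^ E := by
          rcases le_or_gt E 0 with hE0 | hE0
          · have := Real.rpow_le_rpow_of_nonpos hml hlo hE0
            linarith
          · have hup : ‖y‖ ≤ Real.sqrt d * R := norm_le_of_mem_box hR.le hymem.1
            have h3 := Real.rpow_le_rpow (norm_nonneg y) hup hE0.le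
            have h4 : (0:ℝ) ≤ (h * (mdist ℓ:ℝ)) ^ E := Real.rpow_nonneg hml.le _
            linarith
        linarith
      · exact mul_nonneg hK'0 hB0
    calc C * h ^ (d + 2) *
          ∑ β ∈ Finset.univ.filter (fun β : Fin d → Fin 3 => (∑ i, (β i : ℕ)) = 2),
            sSup ((fun y => |Dm (fun i => (β i : ℕ)) φ y|) '' gridCube d h ℓ)
        ≤ C * h ^ (d + 2) *
          ∑ _β ∈ Finset.univ.filter (fun β : Fin d → Fin 3 => (∑ i, (β i : ℕ)) = 2),
            K' * ((1 + (Real.sqrt d * R) ^ E) + (h * mdist ℓ) ^ E) := by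
          apply mul_le_mul_of_nonneg_left (Finset.sum_le_sum hssup) (by positivity)
      _ = (C * nβ * K') * (h^(d+2) * ((1 + (Real.sqrt d * R) ^ E) + (h * mdist ℓ) ^ E)) := by
          rw [Finset.sum_const, nsmul_eq_mul, ← hnβ]
          ring
  set f : {ℓ : Fin d → ℤ // gridCube d h ℓ ⊆ box d R \ box d h} → ℝ :=
    fun ℓ => C * h ^ (d + 2) *
      ∑ β ∈ Finset.univ.filter (fun β : Fin d → Fin 3 => (∑ i, (β i : ℕ)) = 2),
        sSup ((fun y => |Dm (fun i => (β i : ℕ)) φ y|) '' gridCube d h ℓ.1) with hf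
  have hbound : ∀ u : Finset {ℓ : Fin d → ℤ // gridCube d h ℓ ⊆ box d R \ box d h},
      ∑ x ∈ u, f x ≤ C * nβ * K' * bigc * h ^ 2 := by
    intro u
    set s : Finset (Fin d → ℤ) := u.image Subtype.val with hsdef
    have hs : ∀ ℓ ∈ s, gridCube d h ℓ ⊆ box d R \ box d h := by
      intro ℓ hℓ
      obtain ⟨x, -, rfl⟩ := Finset.mem_image.mp hℓ
      exact x.2
    have h1 : ∑ x ∈ u, f x = ∑ ℓ ∈ s, C * h ^ (d + 2) *
        ∑ β ∈ Finset.univ.filter (fun β : Fin d → Fin 3 => (∑ i, (β i : ℕ)) = 2),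
          sSup ((fun y => |Dm (fun i => (β i : ℕ)) φ y|) '' gridCube d h ℓ) := by
      rw [hsdef, Finset.sum_image (fun x _ y _ hxy => Subtype.ext hxy)]
    rw [h1]
    calc (∑ ℓ ∈ s, C * h ^ (d + 2) *
          ∑ β ∈ Finset.univ.filter (fun β : Fin d → Fin 3 => (∑ i, (β i : ℕ)) = 2),
            sSup ((fun y => |Dm (fun i => (β i : ℕ)) φ y|) '' gridCube d h ℓ))
        ≤ ∑ ℓ ∈ s, (C * nβ * K') *
            (h^(d+2) * ((1 + (Real.sqrt d * R) ^ E) + (h * mdist ℓ) ^ E)) :=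
          Finset.sum_le_sum (fun ℓ hℓ => hterm ℓ (hs ℓ hℓ))
      _ = (C * nβ * K') * ∑ ℓ ∈ s,
            h^(d+2) * ((1 + (Real.sqrt d * R) ^ E) + (h * mdist ℓ) ^ E) := by
          rw [Finset.mul_sum]
      _ ≤ (C * nβ * K') * (bigc * h^2) := by
          apply mul_le_mul_of_nonneg_left _ hCnK0
          exact master hd α R hα0 hα2 hR hh hhR s hs
      _ = C * nβ * K' * bigc * h ^ 2 := by ring
  by_cases hsum : Summable f
  · exact Summable.tsum_le_of_sum_le hsum hbound
  · rw [tsum_eq_zero_of_not_summable hsum]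
    have : (0:ℝ) ≤ C * nβ * K' * bigc * h ^ 2 := by
      have := mul_nonneg hCnK0 hbigc0
      positivity
    linarith
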